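/- For every pair of natural numbers r, s with 1 ≤ r ≤ s, the integer interval [r, s] can be partitioned into two sequences of disjoint and consecutive intervals I_{-p}, ..., I_0 and I_1, ..., I_q, each belonging to the geometric covering 𝒞, such that |I_{-i}|/|I_{-i+1}| ≤ 1/2 for all i ≥ 1 and |I_i|/|I_{i-1}| ≤ 1/2 for all i ≥ 2 (here |I| denotes the number of integers in I, consecutive means the right endpoint of each interval is one less than the left endpoint of the next, and together the intervals cover exactly [r, s]). -/

import Mathlib

/-- Membership in the geometric covering 𝒞: the interval `[a, b]` of integers
belongs to 𝒞 iff it has the form `[i * 2^k, (i+1) * 2^k - 1]` for some `k ≥ 0`, `i ≥ 1`. -/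
def InGeomCover (a b : ℕ) : Prop :=
  ∃ k i : ℕ, 1 ≤ i ∧ a = i * 2 ^ k ∧ b = (i + 1) * 2 ^ k - 1

lemma mem_cover {x k : ℕ} (hx : 1 ≤ x) (hdvd : 2 ^ k ∣ x) :
    InGeomCover x (x + 2 ^ k - 1) := by
  obtain ⟨c, hc⟩ := hdvd
  have hK : 0 < 2 ^ k := Nat.pow_pos (by norm_num)
  have h1 : (c + 1) * 2 ^ k = c * 2 ^ k + 2 ^ k := by ring
  have h2 : c * 2 ^ k = 2 ^ k * c := by ring
  exact ⟨k, c, by nlinarith, by omega, by omega⟩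

/-- greedy decomposition from the left with strictly decreasing dyadic sizes -/
lemma right_chain : ∀ n : ℕ, ∀ r : ℕ, 1 ≤ n → 1 ≤ r → (∀ k, 2 ^ k ≤ n → 2 ^ k ∣ r) →
    ∃ (q : ℕ) (a b : ℕ → ℕ),
      (∀ j, j ≤ q → InGeomCover (a j) (b j)) ∧
      (∀ j, j ≤ q → a j ≤ b j) ∧
      a 0 = r ∧ b q = r + n - 1 ∧
      (∀ j, j < q → a (j + 1) = b j + 1) ∧
      (∀ j, 1 ≤ j → j ≤ q → 2 * (b j - a j + 1) ≤ b (j - 1) - a (j - 1) + 1) ∧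
      (∃ m, b 0 + 1 = a 0 + 2 ^ m ∧ 2 ^ m ≤ n) := by
  intro n
  induction n using Nat.strong_induction_on with
  | _ n ih =>
    intro r hn hr hdvd
    set k := Nat.log 2 n with hk
    have hk1 : 2 ^ k ≤ n := Nat.pow_log_le_self 2 (by omega)
    have hk2 : n < 2 ^ (k + 1) := Nat.lt_pow_succ_log_self (by norm_num) n
    by_cases hcase : n = 2 ^ k
    · refine ⟨0, fun _ => r, fun _ => r + n - 1, ?_, ?_, rfl, rfl, ?_, ?_,
        ⟨k, show r + n - 1 + 1 = r + 2 ^ k by omega, hk1⟩⟩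
      · intro j _
        show InGeomCover r (r + n - 1)
        have := mem_cover hr (hdvd k hk1)
        rwa [← hcase] at this
      · intro j _; show r ≤ r + n - 1; omega
      · intro j hj; omega
      · intro j hj1 hj2; omega
    · have hn' : 1 ≤ n - 2 ^ k := by omega
      have hlt : n - 2 ^ k < n := by omega
      have hdvd' : ∀ j, 2 ^ j ≤ n - 2 ^ k → 2 ^ j ∣ r + 2 ^ k := by
        intro j hj
        have hjk : 2 ^ j < 2 ^ k := by omega
        have hjk' : j < k := (Nat.pow_lt_pow_iff_right (by norm_num)).mp hjk
        have h1 : 2 ^ j ∣ 2 ^ k := pow_dvd_pow 2 (le_of_lt hjk')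
        have h2 : 2 ^ j ∣ r := hdvd j (by omega)
        exact Nat.dvd_add h2 h1
      obtain ⟨q', A, B, hmem, hle, ha0, hbq, hcons, hrat, m', hm'1, hm'2⟩ :=
        ih (n - 2 ^ k) hlt (r + 2 ^ k) hn' (by omega) hdvd'
      have hK : 0 < 2 ^ k := Nat.pow_pos (by norm_num)
      refine ⟨q' + 1, fun j => match j with | 0 => r | j + 1 => A j,
        fun j => match j with | 0 => r + 2 ^ k - 1 | j + 1 => B j,
        ?_, ?_, rfl, ?_, ?_, ?_, ⟨k, show r + 2 ^ k - 1 + 1 = r + 2 ^ k by omega, hk1⟩⟩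
      · intro j hj
        rcases j with _ | j
        · exact mem_cover hr (hdvd k hk1)
        · exact hmem j (by omega)
      · intro j hj
        rcases j with _ | j
        · show r ≤ r + 2 ^ k - 1; omega
        · exact hle j (by omega)
      · show B q' = r + n - 1
        omega
      · intro j hj
        rcases j with _ | j
        · show A 0 = r + 2 ^ k - 1 + 1
          omega
        · exact hcons j (by omega)
      · intro j hj1 hj2
        rcases j with _ | j
        · omega
        · rcases j with _ | j
          · -- junction: index 1 versus index 0
            show 2 * (B 0 - A 0 + 1) ≤ r + 2 ^ k - 1 - r + 1
            have h0 : A 0 ≤ B 0 := hle 0 (by omega)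
            have hm'k : m' < k := by
              have : 2 ^ m' < 2 ^ k := by omega
              exact (Nat.pow_lt_pow_iff_right (by norm_num)).mp this
            have : 2 ^ (m' + 1) ≤ 2 ^ k := Nat.pow_le_pow_right (by norm_num) hm'k
            have hpow : 2 ^ (m' + 1) = 2 * 2 ^ m' := by ring
            omega
          · exact hrat (j + 1) (by omega) (by omega)

lemma main_aux : ∀ N : ℕ, ∀ r s : ℕ, 1 ≤ r → r ≤ s → s + 1 - r ≤ N →
    ∃ (p q : ℕ) (a b : ℤ → ℕ),
      (∀ j : ℤ, -(p : ℤ) ≤ j → j ≤ (q : ℤ) → InGeomCover (a j) (b j)) ∧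
      (∀ j : ℤ, -(p : ℤ) ≤ j → j ≤ (q : ℤ) → a j ≤ b j) ∧
      a (-(p : ℤ)) = r ∧ b (q : ℤ) = s ∧
      (∀ j : ℤ, -(p : ℤ) ≤ j → j < (q : ℤ) → a (j + 1) = b j + 1) ∧
      (∀ i : ℕ, 1 ≤ i → (i : ℤ) ≤ (p : ℤ) →
        2 * (b (-(i : ℤ)) - a (-(i : ℤ)) + 1) ≤ b (-(i : ℤ) + 1) - a (-(i : ℤ) + 1) + 1) ∧
      (∀ i : ℕ, 2 ≤ i → (i : ℤ) ≤ (q : ℤ) →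
        2 * (b (i : ℤ) - a (i : ℤ) + 1) ≤ b ((i : ℤ) - 1) - a ((i : ℤ) - 1) + 1) ∧
      (b (-(p : ℤ)) + 1 = a (-(p : ℤ)) + 2 ^ (r.factorization 2) ∨
        (p = 0 ∧ ∀ i : ℕ, 1 ≤ i → (i : ℤ) ≤ (q : ℤ) →
          2 * (b (i : ℤ) - a (i : ℤ) + 1) ≤ b ((i : ℤ) - 1) - a ((i : ℤ) - 1) + 1)) := by
  intro N
  induction N with
  | zero => intro r s hr hrs hN; omega
  | succ N ih =>
    intro r s hr hrs hN
    set v := r.factorization 2 with hv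
    clear_value v
    have hvdvd : 2 ^ v ∣ r := by rw [hv]; exact Nat.ordProj_dvd r 2
    have hV : 0 < 2 ^ v := Nat.pow_pos (by norm_num)
    by_cases hcase : s + 1 ≤ r + 2 ^ v
    · -- single decreasing chain
      have hdvd : ∀ k, 2 ^ k ≤ s + 1 - r → 2 ^ k ∣ r := by
        intro k hk
        have h1 : 2 ^ k ≤ 2 ^ v := by omega
        have h2 : k ≤ v := (Nat.pow_le_pow_iff_right (by norm_num)).mp h1
        exact dvd_trans (pow_dvd_pow 2 h2) hvdvd
      obtain ⟨q, A, B, hmem, hle, ha0, hbq, hcons, hrat, _⟩ :=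
        right_chain (s + 1 - r) r (by omega) hr hdvd
      refine ⟨0, q, fun j => A j.toNat, fun j => B j.toNat, ?_, ?_, ?_, ?_, ?_, ?_, ?_, ?_⟩
      · intro j hj1 hj2
        exact hmem j.toNat (by omega)
      · intro j hj1 hj2
        exact hle j.toNat (by omega)
      · simpa using ha0
      · show B ((q : ℤ)).toNat = s
        rw [Int.toNat_natCast]
        omega
      · intro j hj1 hj2
        show A (j + 1).toNat = B j.toNat + 1
        have h1 : (j + 1).toNat = j.toNat + 1 := by omega
        rw [h1]
        exact hcons j.toNat (by omega)
      · intro i hi1 hi2; omega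
      · intro i hi1 hi2
        show 2 * (B ((i : ℤ)).toNat - A ((i : ℤ)).toNat + 1) ≤
          B ((i : ℤ) - 1).toNat - A ((i : ℤ) - 1).toNat + 1
        have h1 : ((i : ℤ)).toNat = i := by omega
        have h2 : ((i : ℤ) - 1).toNat = i - 1 := by omega
        rw [h1, h2]
        exact hrat i (by omega) (by omega)
      · refine Or.inr ⟨rfl, ?_⟩
        intro i hi1 hi2
        show 2 * (B ((i : ℤ)).toNat - A ((i : ℤ)).toNat + 1) ≤
          B ((i : ℤ) - 1).toNat - A ((i : ℤ) - 1).toNat + 1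
        have h1 : ((i : ℤ)).toNat = i := by omega
        have h2 : ((i : ℤ) - 1).toNat = i - 1 := by omega
        rw [h1, h2]
        exact hrat i (by omega) (by omega)
    · -- peel off [r, r + 2^v - 1] and recurse on r + 2^v
      have hrs' : r + 2 ^ v ≤ s := by omega
      -- valuation increases
      have hodd : ¬ 2 ^ (v + 1) ∣ r := by
        rw [hv]; exact Nat.pow_succ_factorization_not_dvd (by omega) Nat.prime_two
      obtain ⟨c, hc⟩ := hvdvd
      have hceven : 2 ∣ c + 1 := by
        rcases Nat.even_or_odd c with hce | hco
        · exfalso; obtain ⟨d, hd⟩ := hce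
          exact hodd ⟨d, by subst hc; subst hd; ring⟩
        · obtain ⟨d, hd⟩ := hco; exact ⟨d + 1, by omega⟩
      have hdvd' : 2 ^ (v + 1) ∣ r + 2 ^ v := by
        obtain ⟨d, hd⟩ := hceven
        refine ⟨d, ?_⟩
        have h1 : r + 2 ^ v = 2 ^ v * (c + 1) := by rw [hc]; ring
        rw [h1, hd]; ring
      have hv' : v + 1 ≤ (r + 2 ^ v).factorization 2 :=
        (Nat.Prime.pow_dvd_iff_le_factorization Nat.prime_two (by omega)).mp hdvd'
      obtain ⟨p', q', A, B, hmem, hle, ha0, hbq, hcons, hratL, hratR, hstr⟩ :=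
        ih (r + 2 ^ v) s (by omega) hrs' (by omega)
      rcases hstr with hstr | ⟨hp0, hfull⟩
      · -- prepend as I_{-(p'+1)}
        refine ⟨p' + 1, q', fun j => if j < -(p' : ℤ) then r else A j,
          fun j => if j < -(p' : ℤ) then r + 2 ^ v - 1 else B j, ?_, ?_, ?_, ?_, ?_, ?_, ?_, ?_⟩
        · intro j hj1 hj2
          by_cases h : j < -(p' : ℤ)
          · simp only [if_pos h]
            exact mem_cover hr ⟨c, hc⟩
          · simp only [if_neg h]
            exact hmem j (by omega) hj2
        · intro j hj1 hj2
          by_cases h : j < -(p' : ℤ)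
          · simp only [if_pos h]; omega
          · simp only [if_neg h]; exact hle j (by omega) hj2
        · have h : -((p' : ℤ) + 1) < -(p' : ℤ) := by omega
          simp only [Nat.cast_add, Nat.cast_one, if_pos h]
        · have h : ¬ ((q' : ℤ) < -(p' : ℤ)) := by omega
          simp only [if_neg h]; exact hbq
        · intro j hj1 hj2
          by_cases h : j + 1 < -(p' : ℤ)
          · omega
          · simp only [if_neg h]
            by_cases h2 : j < -(p' : ℤ)
            · have hj1' : j + 1 = -(p' : ℤ) := by omega
              rw [hj1', ha0]
              simp only [if_pos h2]
              omega
            · simp only [if_neg h2]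
              exact hcons j (by omega) hj2
        · intro i hi1 hi2
          by_cases h : -(i : ℤ) < -(p' : ℤ)
          · -- i = p' + 1, the new junction
            have h3 : -(i : ℤ) + 1 = -(p' : ℤ) := by omega
            have h4 : ¬ (-(p' : ℤ) < -(p' : ℤ)) := by omega
            simp only [if_pos h, h3, if_neg h4]
            have hszA : B (-(p' : ℤ)) + 1 = A (-(p' : ℤ)) + 2 ^ ((r + 2 ^ v).factorization 2) :=
              hstr
            have hle' : A (-(p' : ℤ)) ≤ B (-(p' : ℤ)) := hle _ (by omega) (by omega)
            have hpow : 2 ^ (v + 1) ≤ 2 ^ ((r + 2 ^ v).factorization 2) :=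
              Nat.pow_le_pow_right (by norm_num) hv'
            have hpow2 : 2 ^ (v + 1) = 2 * 2 ^ v := by ring
            omega
          · have h2 : ¬ (-(i : ℤ) + 1 < -(p' : ℤ)) := by omega
            simp only [if_neg h, if_neg h2]
            exact hratL i hi1 (by omega)
        · intro i hi1 hi2
          have h : ¬ ((i : ℤ) < -(p' : ℤ)) := by omega
          have h2 : ¬ ((i : ℤ) - 1 < -(p' : ℤ)) := by omega
          simp only [if_neg h, if_neg h2]
          exact hratR i hi1 hi2
        · left
          have h : -((p' : ℤ) + 1) < -(p' : ℤ) := by omega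
          simp only [Nat.cast_add, Nat.cast_one, if_pos h]
          omega
      · -- p' = 0 : shift the whole chain right, new I_0 = [r, r + 2^v - 1]
        subst hp0
        have ha0' : A 0 = r + 2 ^ v := by simpa using ha0
        refine ⟨0, q' + 1, fun j => if j ≤ 0 then r else A (j - 1),
          fun j => if j ≤ 0 then r + 2 ^ v - 1 else B (j - 1), ?_, ?_, ?_, ?_, ?_, ?_, ?_, ?_⟩
        · intro j hj1 hj2
          by_cases h : j ≤ 0
          · simp only [if_pos h]
            exact mem_cover hr ⟨c, hc⟩
          · simp only [if_neg h]
            exact hmem (j - 1) (by omega) (by omega)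
        · intro j hj1 hj2
          by_cases h : j ≤ 0
          · simp only [if_pos h]; omega
          · simp only [if_neg h]; exact hle (j - 1) (by omega) (by omega)
        · norm_num
        · have h : ¬ (((q' : ℤ) + 1) ≤ 0) := by omega
          push_cast
          simp only [if_neg h, add_sub_cancel_right]
          exact hbq
        · intro j hj1 hj2
          by_cases h : j ≤ 0
          · have hj : j = 0 := by omega
            have h2 : ¬ (j + 1 ≤ 0) := by omega
            subst hj
            simp only [if_neg h2, if_pos h]
            norm_num
            rw [ha0']
            omega
          · have h2 : ¬ (j + 1 ≤ 0) := by omega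
            simp only [if_neg h, if_neg h2]
            have he : j + 1 - 1 = (j - 1) + 1 := by omega
            rw [he]
            exact hcons (j - 1) (by omega) (by omega)
        · intro i hi1 hi2; omega
        · intro i hi1 hi2
          have h : ¬ ((i : ℤ) ≤ 0) := by omega
          have h2 : ¬ ((i : ℤ) - 1 ≤ 0) := by omega
          simp only [if_neg h, if_neg h2]
          have key := hfull (i - 1) (by omega) (by push_cast; omega)
          have e1 : ((i - 1 : ℕ) : ℤ) = (i : ℤ) - 1 := by push_cast; omega
          rw [e1] at key
          convert key using 4 <;> omega
        · left
          norm_num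
          omega

/-- **Geometric covering partition lemma.**
For any `1 ≤ r ≤ s`, the interval `[r, s]` can be partitioned into two sequences of
disjoint consecutive intervals `I_{-p}, ..., I_0` and `I_1, ..., I_q`, all belonging to
the geometric covering 𝒞, such that `|I_{-i}|/|I_{-i+1}| ≤ 1/2` for all `i ≥ 1` and
`|I_i|/|I_{i-1}| ≤ 1/2` for all `i ≥ 2`. The intervals are indexed by `j ∈ [-p, q]`,
with left endpoints `a j` and right endpoints `b j`. -/
theorem geometric_covering_partition (r s : ℕ) (hr : 1 ≤ r) (hrs : r ≤ s) :
    ∃ (p q : ℕ) (a b : ℤ → ℕ),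
      -- every interval in the sequence belongs to the geometric covering 𝒞
      (∀ j : ℤ, -(p : ℤ) ≤ j → j ≤ (q : ℤ) → InGeomCover (a j) (b j)) ∧
      -- each interval is nonempty
      (∀ j : ℤ, -(p : ℤ) ≤ j → j ≤ (q : ℤ) → a j ≤ b j) ∧
      -- together they cover exactly [r, s]: first left endpoint is r, last right endpoint is s,
      a (-(p : ℤ)) = r ∧ b (q : ℤ) = s ∧
      -- and they are consecutive (hence disjoint): each interval starts right after the previous
      (∀ j : ℤ, -(p : ℤ) ≤ j → j < (q : ℤ) → a (j + 1) = b j + 1) ∧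
      -- |I_{-i}| / |I_{-i+1}| ≤ 1/2 for all i ≥ 1
      (∀ i : ℕ, 1 ≤ i → (i : ℤ) ≤ (p : ℤ) →
        2 * (b (-(i : ℤ)) - a (-(i : ℤ)) + 1) ≤ b (-(i : ℤ) + 1) - a (-(i : ℤ) + 1) + 1) ∧
      -- |I_i| / |I_{i-1}| ≤ 1/2 for all i ≥ 2
      (∀ i : ℕ, 2 ≤ i → (i : ℤ) ≤ (q : ℤ) →
        2 * (b (i : ℤ) - a (i : ℤ) + 1) ≤ b ((i : ℤ) - 1) - a ((i : ℤ) - 1) + 1) := by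
  obtain ⟨p, q, a, b, h1, h2, h3, h4, h5, h6, h7, _⟩ :=
    main_aux (s + 1 - r) r s hr hrs (le_refl _)
  exact ⟨p, q, a, b, h1, h2, h3, h4, h5, h6, h7⟩
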